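/- Fix τ ∈ S_k, n ≥ k, and j with 0 ≤ j ≤ k such that either j = 0 or the pattern of τ_1…τ_j is an involution in S_j. Then the number of involutions π ∈ S_n which contain τ as a subsequence and which map exactly j elements of {1,…,k} into {1,…,k} equals C(n-k, k-j) · t_{n-2k+j}. -/

import Mathlib

open Equiv Finset

/-- The number of involutions in the symmetric group S_n. -/
def numInvolutions (n : ℕ) : ℕ :=
  (Finset.univ.filter fun π : Equiv.Perm (Fin n) => π * π = 1).card

/-- `π ∈ S_n` contains `τ ∈ S_k` as a subsequence. -/
def ContainsSubseq {n k : ℕ} (π : Equiv.Perm (Fin n)) (τ : Equiv.Perm (Fin k)) : Prop :=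
  ∃ ι : Fin k → Fin n, StrictMono ι ∧ ∀ m : Fin k, (π (ι m) : ℕ) = (τ m : ℕ)

/-- `p` is the pattern (order-preserving relabeling) of the word `w`. -/
def IsPattern {j : ℕ} {α : Type*} [LinearOrder α] (w : Fin j → α) (p : Equiv.Perm (Fin j)) : Prop :=
  ∀ a b : Fin j, p a ≤ p b ↔ w a ≤ w b

/-- The pattern of `τ_1 … τ_j` is an involution in S_j. -/
def InitPatternIsInvolution {k : ℕ} (τ : Equiv.Perm (Fin k)) (j : ℕ) : Prop :=
  ∃ hjk : j ≤ k, ∃ p : Equiv.Perm (Fin j),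
    IsPattern (fun m : Fin j => τ (Fin.castLE hjk m)) p ∧ p * p = 1

/-- The j-set of `τ`. -/
def JSet {k : ℕ} (τ : Equiv.Perm (Fin k)) : Set ℕ :=
  {0} ∪ {j | 1 ≤ j ∧ InitPatternIsInvolution τ j}

open scoped Classical in
/-- The j-set of `τ`, as a finset. -/
noncomputable def JFinset {k : ℕ} (τ : Equiv.Perm (Fin k)) : Finset ℕ :=
  (Finset.range (k + 1)).filter fun j => j ∈ JSet τ

/-- Concatenation of decreasing blocks of consecutive integers starting above `s`. -/
def layersFrom : ℕ → List ℕ → List ℕ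
  | _, [] => []
  | s, a :: rest => ((List.range a).reverse.map fun t => s + t + 1) ++ layersFrom (s + a) rest

/-- `τ` is a layered permutation. -/
def IsLayered {k : ℕ} (τ : Equiv.Perm (Fin k)) : Prop :=
  ∃ comp : List ℕ, (∀ a ∈ comp, 0 < a) ∧ comp.sum = k ∧
    List.ofFn (fun m : Fin k => (τ m : ℕ) + 1) = layersFrom 0 comp

open scoped Classical

lemma card_lo {k n : ℕ} (hn : k ≤ n) :
    (Finset.univ.filter fun y : Fin n => (y : ℕ) < k).card = k := by
  have : (Finset.univ.filter fun y : Fin n => (y : ℕ) < k)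
      = (Finset.univ : Finset (Fin k)).image (Fin.castLE hn) := by
    ext y
    simp only [mem_filter, mem_univ, true_and, mem_image]
    constructor
    · intro h
      refine ⟨⟨y, h⟩, ?_⟩
      ext; simp
    · rintro ⟨a, rfl⟩; exact a.2
  rw [this, Finset.card_image_of_injective _ (Fin.castLE_injective hn)]
  simp

lemma card_involutions_support {n : ℕ} (C : Finset (Fin n)) :
    (Finset.univ.filter fun f : Perm (Fin n) => f * f = 1 ∧ ∀ x : Fin n, x ∉ C → f x = x).card
      = numInvolutions C.card := by
  classical
  rw [numInvolutions]
  set eqv : Fin C.card ≃ {x : Fin n // x ∈ C} := C.equivFin.symm with heqv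
  refine (Finset.card_bij (fun f _ => Equiv.Perm.extendDomain f eqv) ?_ ?_ ?_).symm
  · intro g hg
    simp only [mem_filter, mem_univ, true_and] at hg ⊢
    constructor
    · rw [Equiv.Perm.extendDomain_mul, hg, Equiv.Perm.extendDomain_one]
    · intro x hx
      exact Equiv.Perm.extendDomain_apply_not_subtype g eqv hx
  · intro g₁ h₁ g₂ h₂ h
    ext x
    have this : (g₁.extendDomain eqv) ((eqv x : Fin n)) = (g₂.extendDomain eqv) ((eqv x : Fin n)) := by
      rw [h]
    rw [Equiv.Perm.extendDomain_apply_subtype _ eqv (eqv x).2,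
      Equiv.Perm.extendDomain_apply_subtype _ eqv (eqv x).2] at this
    simp only [Subtype.coe_eta, Equiv.symm_apply_apply] at this
    exact congrArg _ (eqv.injective (Subtype.ext this))
  · intro f hf
    simp only [mem_filter, mem_univ, true_and] at hf
    obtain ⟨hinv, hfix⟩ := hf
    have hmem : ∀ x : Fin n, x ∈ C ↔ f x ∈ C := by
      intro x
      constructor
      · intro hx
        by_contra hfx
        have := hfix _ hfx
        have : f x = x := f.injective (by rw [← Perm.mul_apply, hinv]; simpa using this.symm)
        rw [this] at hfx; exact hfx hx
      · intro hfx
        by_contra hx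
        have := hfix _ hx
        rw [this] at hfx; exact hx hfx
    have hff : ∀ y : Fin n, f (f y) = y := fun y => by
      rw [← Perm.mul_apply, hinv]; rfl
    refine ⟨eqv.symm.permCongr (f.subtypePerm (fun x => (hmem x).symm)), ?_, ?_⟩
    · simp only [mem_filter, mem_univ, true_and]
      ext x
      simp [Equiv.permCongr_apply, Perm.mul_apply, Equiv.Perm.subtypePerm_apply, hff]
    ext x
    by_cases hx : x ∈ C
    · rw [Equiv.Perm.extendDomain_apply_subtype _ eqv hx]
      simp [Equiv.Perm.subtypePerm]
    · rw [Equiv.Perm.extendDomain_apply_not_subtype _ eqv hx, hfix _ hx]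
lemma lower_filter {k j : ℕ} (S : Finset (Fin k))
    (hS : ∀ a b : Fin k, a ≤ b → b ∈ S → a ∈ S) (hc : S.card = j) (m : Fin k) :
    m ∈ S ↔ (m : ℕ) < j := by
  constructor
  · intro hm
    have h1 : Finset.Iic m ⊆ S := fun a ha => hS a m (by simpa using ha) hm
    have := Finset.card_le_card h1
    rw [Fin.card_Iic, hc] at this
    omega
  · intro hm
    by_contra hmS
    have h1 : S ⊆ Finset.Iio m := by
      intro b hb
      simp only [Finset.mem_Iio]
      by_contra hbm
      exact hmS (hS m b (le_of_not_gt hbm) hb)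
    have := Finset.card_le_card h1
    rw [Fin.card_Iio, hc] at this
    omega

section Main
variable {k n j : ℕ} (τ : Equiv.Perm (Fin k)) (hn : k ≤ n) (hjk : j ≤ k)

noncomputable def Tset : Finset (Fin n) :=
  (Finset.univ : Finset (Fin j)).image fun a => Fin.castLE hn (τ (Fin.castLE hjk a))

lemma Tset_lt : ∀ y ∈ Tset τ hn hjk, (y : ℕ) < k := by
  intro y hy
  simp only [Tset, mem_image] at hy
  obtain ⟨a, -, rfl⟩ := hy
  exact (τ (Fin.castLE hjk a)).2

lemma Tset_card : (Tset τ hn hjk).card = j := by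
  rw [Tset, Finset.card_image_of_injective, card_univ, Fintype.card_fin]
  intro a b h
  exact Fin.castLE_injective hjk (τ.injective (Fin.castLE_injective hn h))

variable (B : Finset (Fin n))

lemma TB_card (hB1 : ∀ y ∈ B, k ≤ (y : ℕ)) (hB2 : B.card = k - j) :
    (Tset τ hn hjk ∪ B).card = k := by
  rw [Finset.card_union_of_disjoint, Tset_card, hB2]
  · omega
  · rw [Finset.disjoint_left]
    intro y hy hyB
    exact absurd (hB1 y hyB) (not_le.2 (Tset_lt τ hn hjk y hy))

noncomputable def iotaB : Fin k → Fin n :=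
  if h : (Tset τ hn hjk ∪ B).card = k then (Tset τ hn hjk ∪ B).orderEmbOfFin h
  else fun m => ⟨m, lt_of_lt_of_le m.2 hn⟩

variable (hB1 : ∀ y ∈ B, k ≤ (y : ℕ)) (hB2 : B.card = k - j)
include hB1 hB2

lemma iotaB_eq : iotaB τ hn hjk B
    = (Tset τ hn hjk ∪ B).orderEmbOfFin (TB_card τ hn hjk B hB1 hB2) := by
  rw [iotaB, dif_pos]

lemma iotaB_strictMono : StrictMono (iotaB τ hn hjk B) := by
  rw [iotaB_eq τ hn hjk B hB1 hB2]
  exact (Finset.orderEmbOfFin _ _).strictMono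

lemma iotaB_inj : Function.Injective (iotaB τ hn hjk B) :=
  (iotaB_strictMono τ hn hjk B hB1 hB2).injective

lemma iotaB_mem (m : Fin k) : iotaB τ hn hjk B m ∈ Tset τ hn hjk ∪ B := by
  rw [iotaB_eq τ hn hjk B hB1 hB2]
  exact Finset.orderEmbOfFin_mem _ _ _

lemma iotaB_surj {y : Fin n} (hy : y ∈ Tset τ hn hjk ∪ B) :
    ∃ m, iotaB τ hn hjk B m = y := by
  rw [iotaB_eq τ hn hjk B hB1 hB2]
  have : y ∈ Set.range ⇑((Tset τ hn hjk ∪ B).orderEmbOfFin (TB_card τ hn hjk B hB1 hB2)) := by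
    rw [Finset.range_orderEmbOfFin]; exact_mod_cast hy
  exact this

lemma iotaB_lt_iff (m : Fin k) :
    (iotaB τ hn hjk B m : ℕ) < k ↔ (m : ℕ) < j := by
  have key : (Finset.univ.filter fun m : Fin k => (iotaB τ hn hjk B m : ℕ) < k).card = j := by
    refine Eq.trans ?_ (Tset_card τ hn hjk)
    apply Finset.card_bij (fun m _ => iotaB τ hn hjk B m)
    · intro m hm
      simp only [mem_filter, mem_univ, true_and] at hm
      have := iotaB_mem τ hn hjk B hB1 hB2 m
      rcases Finset.mem_union.1 this with h | h
      · exact h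
      · exact absurd (hB1 _ h) (not_le.2 hm)
    · intro a _ b _ h
      exact iotaB_inj τ hn hjk B hB1 hB2 h
    · intro y hy
      obtain ⟨m, rfl⟩ := iotaB_surj τ hn hjk B hB1 hB2 (Finset.mem_union_left _ hy)
      exact ⟨m, by simp [Tset_lt τ hn hjk _ hy], rfl⟩
  have := lower_filter _ ?_ key m
  · simpa using this
  · intro a b hab hb
    simp only [mem_filter, mem_univ, true_and] at hb ⊢
    calc (iotaB τ hn hjk B a : ℕ) ≤ (iotaB τ hn hjk B b : ℕ) := by
          exact_mod_cast ((iotaB_strictMono τ hn hjk B hB1 hB2).monotone hab)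
      _ < k := hb

lemma iotaB_pattern_aux (hj : j = 0 ∨ InitPatternIsInvolution τ j)
    (p : Equiv.Perm (Fin j))
    (hp : ∀ a b : Fin j, p a ≤ p b ↔ τ (Fin.castLE hjk a) ≤ τ (Fin.castLE hjk b))
    (hpp : p * p = 1) (a : Fin j) :
    iotaB τ hn hjk B (Fin.castLE hjk a)
      = Fin.castLE hn (τ (Fin.castLE hjk (p a))) := by
  have hppa : ∀ x : Fin j, p (p x) = x := fun x => by
    have := congrArg (fun q : Equiv.Perm (Fin j) => q x) hpp
    simpa using this
  have hwinj : Function.Injective (fun a : Fin j => τ (Fin.castLE hjk a)) := fun a b h =>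
    Fin.castLE_injective hjk (τ.injective h)
  have hu : (fun a : Fin j => iotaB τ hn hjk B (Fin.castLE hjk a))
      = (Tset τ hn hjk).orderEmbOfFin (Tset_card τ hn hjk) := by
    apply Finset.orderEmbOfFin_unique
    · intro a
      have hlt : (iotaB τ hn hjk B (Fin.castLE hjk a) : ℕ) < k :=
        (iotaB_lt_iff τ hn hjk B hB1 hB2 _).2 a.2
      rcases Finset.mem_union.1 (iotaB_mem τ hn hjk B hB1 hB2 (Fin.castLE hjk a)) with h | h
      · exact h
      · exact absurd (hB1 _ h) (not_le.2 hlt)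
    · exact fun a b hab =>
        iotaB_strictMono τ hn hjk B hB1 hB2 (by exact_mod_cast hab)
  have hv : (fun a : Fin j => Fin.castLE hn (τ (Fin.castLE hjk (p a))))
      = (Tset τ hn hjk).orderEmbOfFin (Tset_card τ hn hjk) := by
    apply Finset.orderEmbOfFin_unique
    · intro a
      exact Finset.mem_image.2 ⟨p a, Finset.mem_univ _, rfl⟩
    · intro a b hab
      have hle : τ (Fin.castLE hjk (p a)) ≤ τ (Fin.castLE hjk (p b)) := by
        rw [← hp (p a) (p b), hppa, hppa]
        exact le_of_lt hab
      have hne : τ (Fin.castLE hjk (p a)) ≠ τ (Fin.castLE hjk (p b)) := by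
        intro h
        exact absurd (p.injective (hwinj h)) (ne_of_lt hab)
      have : τ (Fin.castLE hjk (p a)) < τ (Fin.castLE hjk (p b)) := lt_of_le_of_ne hle hne
      exact_mod_cast this
  rw [show iotaB τ hn hjk B (Fin.castLE hjk a)
      = (fun a : Fin j => iotaB τ hn hjk B (Fin.castLE hjk a)) a from rfl, hu, ← hv]

lemma muB_exists_not_lt {y : Fin n} (hm : ∃ m, iotaB τ hn hjk B m = y)
    (hy : ¬ (y : ℕ) < k) : y ∈ B := by
  obtain ⟨m, rfl⟩ := hm
  rcases Finset.mem_union.1 (iotaB_mem τ hn hjk B hB1 hB2 m) with h | h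
  · exact absurd (Tset_lt τ hn hjk _ h) hy
  · exact h

end Main

section Mu
variable {k n j : ℕ} (τ : Equiv.Perm (Fin k)) (hn : k ≤ n) (hjk : j ≤ k)
variable (B : Finset (Fin n))

noncomputable def muB : Fin n → Fin n := fun y =>
  if h : (y : ℕ) < k then iotaB τ hn hjk B (τ.symm ⟨y, h⟩)
  else if hy : ∃ m, iotaB τ hn hjk B m = y then Fin.castLE hn (τ hy.choose)
  else y

lemma muB_lt {y : Fin n} (h : (y : ℕ) < k) :
    muB τ hn hjk B y = iotaB τ hn hjk B (τ.symm ⟨y, h⟩) := dif_pos h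

lemma muB_c (m : Fin k) :
    muB τ hn hjk B (Fin.castLE hn (τ m)) = iotaB τ hn hjk B m := by
  have h : ((Fin.castLE hn (τ m) : Fin n) : ℕ) < k := (τ m).2
  rw [muB_lt τ hn hjk B h]
  congr 1
  have : (⟨((Fin.castLE hn (τ m) : Fin n) : ℕ), h⟩ : Fin k) = τ m := by
    ext; rfl
  rw [this, Equiv.symm_apply_apply]

lemma muB_high {y : Fin n} (hB1 : ∀ y ∈ B, k ≤ (y : ℕ)) (hB2 : B.card = k - j)
    (h1 : ¬ (y : ℕ) < k) (h2 : y ∉ B) : muB τ hn hjk B y = y := by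
  rw [muB, dif_neg h1, dif_neg]
  intro hm
  exact h2 (muB_exists_not_lt τ hn hjk B hB1 hB2 hm h1)

variable (hB1 : ∀ y ∈ B, k ≤ (y : ℕ)) (hB2 : B.card = k - j)
variable (hj : j = 0 ∨ InitPatternIsInvolution τ j)
include hB1 hB2 hj

lemma muB_iota (m : Fin k) :
    muB τ hn hjk B (iotaB τ hn hjk B m) = Fin.castLE hn (τ m) := by
  by_cases hm : (m : ℕ) < j
  · obtain ⟨hjk', p, hp, hpp⟩ : InitPatternIsInvolution τ j := by
      rcases hj with h0 | h; · omega
      · exact h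
    have hp' : ∀ a b : Fin j, p a ≤ p b ↔ τ (Fin.castLE hjk a) ≤ τ (Fin.castLE hjk b) := hp
    have hppa : ∀ x : Fin j, p (p x) = x := fun x => by
      have := congrArg (fun q : Equiv.Perm (Fin j) => q x) hpp
      simpa using this
    set a : Fin j := ⟨(m : ℕ), hm⟩ with ha
    have hma : m = Fin.castLE hjk a := by ext; rfl
    have hE := iotaB_pattern_aux τ hn hjk B hB1 hB2 hj p hp' hpp
    have h1 : iotaB τ hn hjk B m = Fin.castLE hn (τ (Fin.castLE hjk (p a))) := by
      rw [hma, hE a]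
    have hlt : ((iotaB τ hn hjk B m : Fin n) : ℕ) < k := by
      rw [h1]; exact (τ (Fin.castLE hjk (p a))).2
    rw [muB_lt τ hn hjk B hlt]
    have hval : ((iotaB τ hn hjk B m : Fin n) : ℕ)
        = ((τ (Fin.castLE hjk (p a)) : Fin k) : ℕ) := by rw [h1]; rfl
    have h2 : (⟨((iotaB τ hn hjk B m : Fin n) : ℕ), hlt⟩ : Fin k)
        = τ (Fin.castLE hjk (p a)) := Fin.ext hval
    rw [h2, Equiv.symm_apply_apply, hE (p a), hppa, ← hma]
  · have hge : ¬ ((iotaB τ hn hjk B m : Fin n) : ℕ) < k := by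
      rw [iotaB_lt_iff τ hn hjk B hB1 hB2]; exact hm
    rw [muB, dif_neg hge, dif_pos ⟨m, rfl⟩]
    have hsp := (⟨m, rfl⟩ : ∃ m', iotaB τ hn hjk B m' = iotaB τ hn hjk B m).choose_spec
    have : (⟨m, rfl⟩ : ∃ m', iotaB τ hn hjk B m' = iotaB τ hn hjk B m).choose = m :=
      iotaB_inj τ hn hjk B hB1 hB2 hsp
    rw [this]

lemma muB_invol : Function.Involutive (muB τ hn hjk B) := by
  intro y
  by_cases h1 : (y : ℕ) < k
  · rw [muB_lt τ hn hjk B h1, muB_iota τ hn hjk B hB1 hB2 hj]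
    rw [Equiv.apply_symm_apply]
    ext; rfl
  · by_cases h2 : ∃ m, iotaB τ hn hjk B m = y
    · obtain ⟨m, rfl⟩ := h2
      rw [muB_iota τ hn hjk B hB1 hB2 hj, muB_c]
    · rw [muB_high τ hn hjk B hB1 hB2 h1 (fun hB => h2 (iotaB_surj τ hn hjk B hB1 hB2 (Finset.mem_union_right _ hB))),
        muB_high τ hn hjk B hB1 hB2 h1 (fun hB => h2 (iotaB_surj τ hn hjk B hB1 hB2 (Finset.mem_union_right _ hB)))]

end Mu

section Mu2
variable {k n j : ℕ} (τ : Equiv.Perm (Fin k)) (hn : k ≤ n) (hjk : j ≤ k)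

noncomputable def muPerm (B : Finset (Fin n)) : Equiv.Perm (Fin n) :=
  if h : (∀ y ∈ B, k ≤ (y : ℕ)) ∧ B.card = k - j
      ∧ (j = 0 ∨ InitPatternIsInvolution τ j)
  then (muB_invol τ hn hjk B h.1 h.2.1 h.2.2).toPerm else 1

variable (B : Finset (Fin n))
variable (hB1 : ∀ y ∈ B, k ≤ (y : ℕ)) (hB2 : B.card = k - j)
variable (hj : j = 0 ∨ InitPatternIsInvolution τ j)
include hB1 hB2 hj

lemma muPerm_apply : ⇑(muPerm τ hn hjk B) = muB τ hn hjk B := by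
  rw [muPerm, dif_pos ⟨hB1, hB2, hj⟩]
  rfl

lemma muPerm_mul : muPerm τ hn hjk B * muPerm τ hn hjk B = 1 := by
  ext y
  rw [Equiv.Perm.mul_apply]
  have h := muPerm_apply τ hn hjk B hB1 hB2 hj
  rw [h]
  simp only [Equiv.Perm.one_apply]
  have := muB_invol τ hn hjk B hB1 hB2 hj y
  exact congrArg Fin.val this

end Mu2

lemma perm_sq_apply {n : ℕ} {π : Equiv.Perm (Fin n)} (h : π * π = 1) (y : Fin n) :
    π (π y) = y := by
  rw [← Equiv.Perm.mul_apply, h, Equiv.Perm.one_apply]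

lemma Bof_card {k n j : ℕ} (hn : k ≤ n) (π : Equiv.Perm (Fin n)) (hinv : π * π = 1)
    (hA : (Finset.univ.filter fun x : Fin n => (x : ℕ) < k ∧ ((π x : Fin n) : ℕ) < k).card = j) :
    (Finset.univ.filter fun y : Fin n => k ≤ (y : ℕ) ∧ ((π y : Fin n) : ℕ) < k).card = k - j := by
  classical
  set P : Finset (Fin n) := Finset.univ.filter fun y : Fin n => ((π y : Fin n) : ℕ) < k with hP
  have hPcard : P.card = k := by
    refine Eq.trans ?_ (card_lo hn)
    apply Finset.card_bij (fun y _ => π y)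
    · intro y hy
      simp only [hP, mem_filter, mem_univ, true_and] at hy ⊢
      exact hy
    · intro a _ b _ h
      exact π.injective h
    · intro x hx
      simp only [mem_filter, mem_univ, true_and] at hx
      refine ⟨π x, ?_, perm_sq_apply hinv x⟩
      simp only [hP, mem_filter, mem_univ, true_and]
      rw [perm_sq_apply hinv x]
      exact hx
  have hsplit := Finset.card_filter_add_card_filter_not
    (s := P) (p := fun y : Fin n => (y : ℕ) < k)
  have h1 : P.filter (fun y : Fin n => (y : ℕ) < k)
      = Finset.univ.filter fun x : Fin n => (x : ℕ) < k ∧ ((π x : Fin n) : ℕ) < k := by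
    ext y
    simp only [hP, mem_filter, mem_univ, true_and]
    tauto
  have h2 : P.filter (fun y : Fin n => ¬ (y : ℕ) < k)
      = Finset.univ.filter fun y : Fin n => k ≤ (y : ℕ) ∧ ((π y : Fin n) : ℕ) < k := by
    ext y
    simp only [hP, mem_filter, mem_univ, true_and, not_lt]
    tauto
  rw [h1, h2, hA, hPcard] at hsplit
  omega

lemma mu_eq_pi {k n j : ℕ} (τ : Equiv.Perm (Fin k)) (hn : k ≤ n) (hjk : j ≤ k)
    (hj : j = 0 ∨ InitPatternIsInvolution τ j)
    (π : Equiv.Perm (Fin n)) (hinv : π * π = 1) (hcont : ContainsSubseq π τ)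
    (hA : (Finset.univ.filter fun x : Fin n => (x : ℕ) < k ∧ ((π x : Fin n) : ℕ) < k).card = j) :
    ∀ y : Fin n, ((y : ℕ) < k ∨ y ∈ (Finset.univ.filter fun y : Fin n =>
        k ≤ (y : ℕ) ∧ ((π y : Fin n) : ℕ) < k)) →
      muB τ hn hjk (Finset.univ.filter fun y : Fin n =>
        k ≤ (y : ℕ) ∧ ((π y : Fin n) : ℕ) < k) y = π y := by
  classical
  set B : Finset (Fin n) :=
    Finset.univ.filter (fun y : Fin n => k ≤ (y : ℕ) ∧ ((π y : Fin n) : ℕ) < k) with hB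
  have hB1 : ∀ y ∈ B, k ≤ (y : ℕ) := by
    intro y hy; rw [hB] at hy
    simp only [mem_filter, mem_univ, true_and] at hy; exact hy.1
  have hB2 : B.card = k - j := Bof_card hn π hinv hA
  have hc1 : ∀ (x : Fin n) (h : (x : ℕ) < k), Fin.castLE hn (⟨(x : ℕ), h⟩ : Fin k) = x :=
    fun x h => by ext; rfl
  set g : Fin k → Fin n := fun m => π (Fin.castLE hn (τ m)) with hg
  obtain ⟨ι', hmono, hval⟩ := hcont
  have hι'g : ι' = g := by
    funext m
    have h1 : π (ι' m) = Fin.castLE hn (τ m) := by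
      ext; exact hval m
    have h2 := congrArg π h1
    rw [perm_sq_apply hinv] at h2
    rw [h2, hg]
  have hgmono : StrictMono g := hι'g ▸ hmono
  have hglow : ∀ m : Fin k, ((g m : Fin n) : ℕ) < k ↔ (m : ℕ) < j := by
    have key : (Finset.univ.filter fun m : Fin k => ((g m : Fin n) : ℕ) < k).card = j := by
      rw [← hA]
      apply Finset.card_bij (fun m _ => Fin.castLE hn (τ m))
      · intro m hm
        simp only [mem_filter, mem_univ, true_and] at hm ⊢
        exact ⟨(τ m).2, hm⟩
      · intro a _ b _ h
        exact τ.injective (Fin.castLE_injective hn h)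
      · intro x hx
        simp only [mem_filter, mem_univ, true_and] at hx
        refine ⟨τ.symm ⟨(x : ℕ), hx.1⟩, ?_, ?_⟩
        · simp only [mem_filter, mem_univ, true_and, hg]
          rw [Equiv.apply_symm_apply, hc1]
          exact hx.2
        · rw [Equiv.apply_symm_apply, hc1]
    have hlow : ∀ a b : Fin k, a ≤ b →
        b ∈ (Finset.univ.filter fun m : Fin k => ((g m : Fin n) : ℕ) < k) →
        a ∈ (Finset.univ.filter fun m : Fin k => ((g m : Fin n) : ℕ) < k) := by
      intro a b hab hb
      simp only [mem_filter, mem_univ, true_and] at hb ⊢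
      calc ((g a : Fin n) : ℕ) ≤ ((g b : Fin n) : ℕ) := by
            exact_mod_cast hgmono.monotone hab
        _ < k := hb
    intro m
    have := lower_filter _ hlow key m
    simpa using this
  have hπg : ∀ m : Fin k, π (g m) = Fin.castLE hn (τ m) := fun m => by
    rw [hg]; exact perm_sq_apply hinv _
  have hTA : Tset τ hn hjk
      = Finset.univ.filter (fun x : Fin n => (x : ℕ) < k ∧ ((π x : Fin n) : ℕ) < k) := by
    apply Finset.eq_of_subset_of_card_le
    · intro y hy
      simp only [Tset, mem_image] at hy
      obtain ⟨a, -, rfl⟩ := hy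
      simp only [mem_filter, mem_univ, true_and]
      refine ⟨(τ (Fin.castLE hjk a)).2, ?_⟩
      have : π (Fin.castLE hn (τ (Fin.castLE hjk a))) = g (Fin.castLE hjk a) := rfl
      rw [this]
      exact (hglow _).2 a.2
    · rw [hA, Tset_card]
  have hmem : ∀ m : Fin k, g m ∈ Tset τ hn hjk ∪ B := by
    intro m
    by_cases hlt : ((g m : Fin n) : ℕ) < k
    · refine Finset.mem_union_left _ ?_
      rw [hTA]
      simp only [mem_filter, mem_univ, true_and]
      exact ⟨hlt, by rw [hπg]; exact (τ m).2⟩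
    · refine Finset.mem_union_right _ ?_
      rw [hB]
      simp only [mem_filter, mem_univ, true_and]
      exact ⟨le_of_not_gt hlt, by rw [hπg]; exact (τ m).2⟩
  have hgiota : g = iotaB τ hn hjk B := by
    rw [iotaB_eq τ hn hjk B hB1 hB2]
    exact Finset.orderEmbOfFin_unique _ hmem hgmono
  intro y hy
  rcases hy with h | h
  · rw [muB_lt τ hn hjk B h, ← hgiota]
    show π (Fin.castLE hn (τ (τ.symm ⟨(y : ℕ), h⟩))) = π y
    rw [Equiv.apply_symm_apply, hc1]
  · rw [hB] at h
    simp only [mem_filter, mem_univ, true_and] at h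
    obtain ⟨hky, hπy⟩ := h
    set m : Fin k := τ.symm ⟨((π y : Fin n) : ℕ), hπy⟩ with hm
    have him : iotaB τ hn hjk B m = y := by
      rw [← hgiota]
      show π (Fin.castLE hn (τ (τ.symm ⟨((π y : Fin n) : ℕ), hπy⟩))) = y
      rw [Equiv.apply_symm_apply, hc1]
      exact perm_sq_apply hinv y
    calc muB τ hn hjk B y = muB τ hn hjk B (iotaB τ hn hjk B m) := by rw [him]
      _ = Fin.castLE hn (τ m) := muB_iota τ hn hjk B hB1 hB2 hj m
      _ = π y := by rw [hm, Equiv.apply_symm_apply, hc1]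


lemma not_lt_filter_card {k n : ℕ} (hn : k ≤ n) :
    (Finset.univ.filter fun y : Fin n => k ≤ (y : ℕ)).card = n - k := by
  classical
  have hs := Finset.card_filter_add_card_filter_not
    (s := (Finset.univ : Finset (Fin n))) (p := fun y : Fin n => (y : ℕ) < k)
  rw [card_lo hn] at hs
  have h2 : (Finset.univ.filter fun y : Fin n => ¬ (y : ℕ) < k)
      = Finset.univ.filter fun y : Fin n => k ≤ (y : ℕ) := by
    ext y; simp [not_lt]
  rw [h2] at hs
  simp only [Finset.card_univ, Fintype.card_fin] at hs
  omega

lemma sigma_card {k n j : ℕ} (hn : k ≤ n) (hjk : j ≤ k) :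
    (((Finset.univ.filter fun y : Fin n => k ≤ (y : ℕ)).powersetCard (k - j)).sigma
      (fun B => Finset.univ.filter fun f : Equiv.Perm (Fin n) =>
        f * f = 1 ∧ ∀ y : Fin n, ((y : ℕ) < k ∨ y ∈ B) → f y = y)).card
    = Nat.choose (n - k) (k - j) * numInvolutions (n + j - 2 * k) := by
  classical
  rw [Finset.card_sigma]
  have hper : ∀ B ∈ (Finset.univ.filter fun y : Fin n => k ≤ (y : ℕ)).powersetCard (k - j),
      (Finset.univ.filter fun f : Equiv.Perm (Fin n) =>
        f * f = 1 ∧ ∀ y : Fin n, ((y : ℕ) < k ∨ y ∈ B) → f y = y).card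
      = numInvolutions (n + j - 2 * k) := by
    intro B hB
    rw [Finset.mem_powersetCard] at hB
    obtain ⟨hBsub, hBc⟩ := hB
    have hBsub' : ∀ y ∈ B, k ≤ (y : ℕ) := by
      intro y hy
      have := hBsub hy
      simp only [mem_filter, mem_univ, true_and] at this
      exact this
    have hBle : k - j ≤ n - k := by
      rw [← hBc, ← not_lt_filter_card hn]
      exact Finset.card_le_card hBsub
    set C : Finset (Fin n) :=
      Finset.univ.filter (fun y : Fin n => ¬((y : ℕ) < k ∨ y ∈ B)) with hC
    have heqf : (Finset.univ.filter fun f : Equiv.Perm (Fin n) =>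
          f * f = 1 ∧ ∀ y : Fin n, ((y : ℕ) < k ∨ y ∈ B) → f y = y)
        = (Finset.univ.filter fun f : Equiv.Perm (Fin n) =>
          f * f = 1 ∧ ∀ x : Fin n, x ∉ C → f x = x) := by
      apply Finset.filter_congr
      intro f _
      constructor
      · rintro ⟨h1, h2⟩
        refine ⟨h1, fun x hx => h2 x ?_⟩
        rw [hC] at hx
        simp only [mem_filter, mem_univ, true_and, not_not] at hx
        exact hx
      · rintro ⟨h1, h2⟩
        refine ⟨h1, fun x hx => h2 x ?_⟩
        rw [hC]
        simp only [mem_filter, mem_univ, true_and, not_not]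
        exact hx
    rw [heqf, card_involutions_support]
    have hCc : C.card = n + j - 2 * k := by
      have hCd : C = (Finset.univ.filter fun y : Fin n => k ≤ (y : ℕ)) \ B := by
        ext y
        rw [hC]
        simp only [Finset.mem_sdiff, mem_filter, mem_univ, true_and, not_or, not_lt]
      rw [hCd, Finset.card_sdiff_of_subset hBsub, not_lt_filter_card hn, hBc]
      omega
    rw [hCc]
  rw [Finset.sum_congr rfl hper, Finset.sum_const, Finset.card_powersetCard,
    not_lt_filter_card hn, smul_eq_mul]

theorem count_involutions_containing_with_j {k n j : ℕ} (τ : Equiv.Perm (Fin k))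
    (hn : k ≤ n) (hjk : j ≤ k)
    (hj : j = 0 ∨ InitPatternIsInvolution τ j) :
    (Finset.univ.filter fun π : Equiv.Perm (Fin n) =>
        π * π = 1 ∧ ContainsSubseq π τ ∧
        (Finset.univ.filter fun x : Fin n => (x : ℕ) < k ∧ (π x : ℕ) < k).card = j).card
      = Nat.choose (n - k) (k - j) * numInvolutions (n + j - 2 * k) := by
  classical
  rw [← sigma_card hn hjk]
  apply Finset.card_nbij'
    (i := fun π => ⟨Finset.univ.filter fun y : Fin n =>
        k ≤ (y : ℕ) ∧ ((π y : Fin n) : ℕ) < k,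
      muPerm τ hn hjk (Finset.univ.filter fun y : Fin n =>
        k ≤ (y : ℕ) ∧ ((π y : Fin n) : ℕ) < k) * π⟩)
    (j := fun q => muPerm τ hn hjk q.1 * q.2)
  -- membership forward
  · intro π hπ
    simp only [Finset.mem_coe, mem_filter, mem_univ, true_and] at hπ
    obtain ⟨hinv, hcont, hA⟩ := hπ
    set B : Finset (Fin n) :=
      Finset.univ.filter (fun y : Fin n => k ≤ (y : ℕ) ∧ ((π y : Fin n) : ℕ) < k) with hBdef
    have hB1 : ∀ y ∈ B, k ≤ (y : ℕ) := by
      intro y hy; rw [hBdef] at hy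
      simp only [mem_filter, mem_univ, true_and] at hy; exact hy.1
    have hB2 : B.card = k - j := Bof_card hn π hinv hA
    have hμ := mu_eq_pi τ hn hjk hj π hinv hcont hA
    have hμP : ⇑(muPerm τ hn hjk B) = muB τ hn hjk B :=
      muPerm_apply τ hn hjk B hB1 hB2 hj
    have hπD : ∀ y : Fin n, ((y : ℕ) < k ∨ y ∈ B) →
        (((π y : Fin n) : ℕ) < k ∨ π y ∈ B) := by
      intro y hy
      rcases hy with h | h
      · by_cases hpy : ((π y : Fin n) : ℕ) < k
        · exact Or.inl hpy
        · refine Or.inr ?_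
          rw [hBdef]
          simp only [mem_filter, mem_univ, true_and]
          exact ⟨le_of_not_gt hpy, by rw [perm_sq_apply hinv]; exact h⟩
      · rw [hBdef] at h
        simp only [mem_filter, mem_univ, true_and] at h
        exact Or.inl h.2
    have hπDc : ∀ y : Fin n, ¬(((y : ℕ) < k ∨ y ∈ B)) →
        ¬(((π y : Fin n) : ℕ) < k ∨ π y ∈ B) := by
      intro y hy hc
      rw [not_or, not_lt] at hy
      rcases hc with h | h
      · refine hy.2 ?_
        rw [hBdef]
        simp only [mem_filter, mem_univ, true_and]
        exact ⟨hy.1, h⟩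
      · rw [hBdef] at h
        simp only [mem_filter, mem_univ, true_and] at h
        have := h.2
        rw [perm_sq_apply hinv] at this
        omega
    have hffix : ∀ y : Fin n, ((y : ℕ) < k ∨ y ∈ B) →
        (muPerm τ hn hjk B * π) y = y := by
      intro y hy
      rw [Equiv.Perm.mul_apply]
      have : muPerm τ hn hjk B (π y) = muB τ hn hjk B (π y) := by rw [hμP]
      rw [this, hμ _ (hπD y hy)]
      exact perm_sq_apply hinv y
    simp only [Finset.mem_coe, Finset.mem_sigma, mem_filter, mem_univ, true_and]
    refine ⟨?_, ?_, ?_⟩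
    · rw [Finset.mem_powersetCard]
      refine ⟨?_, hB2⟩
      intro y hy
      simp only [mem_filter, mem_univ, true_and]
      exact hB1 y hy
    · ext y
      rw [Equiv.Perm.mul_apply, Equiv.Perm.one_apply]
      by_cases hy : ((y : ℕ) < k ∨ y ∈ B)
      · rw [hffix y hy, hffix y hy]
      · have h1 : (muPerm τ hn hjk B * π) y = π y := by
          rw [Equiv.Perm.mul_apply]
          have : muPerm τ hn hjk B (π y) = muB τ hn hjk B (π y) := by rw [hμP]
          rw [this]
          have hc := hπDc y hy
          rw [not_or, not_lt] at hc
          rw [muB_high τ hn hjk B hB1 hB2 (not_lt.2 hc.1) hc.2]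
        rw [h1, Equiv.Perm.mul_apply]
        have : muPerm τ hn hjk B (π (π y)) = muB τ hn hjk B (π (π y)) := by rw [hμP]
        rw [this, perm_sq_apply hinv]
        rw [not_or, not_lt] at hy
        rw [muB_high τ hn hjk B hB1 hB2 (not_lt.2 hy.1) hy.2]
    · exact fun y hy => hffix y (by rw [hBdef]; simpa using hy)
  -- membership backward
  · rintro ⟨B, f⟩ hq
    simp only [Finset.mem_coe, Finset.mem_sigma, mem_filter, mem_univ, true_and] at hq
    obtain ⟨hBmem, hf1, hfD⟩ := hq
    rw [Finset.mem_powersetCard] at hBmem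
    obtain ⟨hBsub, hB2⟩ := hBmem
    have hB1 : ∀ y ∈ B, k ≤ (y : ℕ) := by
      intro y hy
      have := hBsub hy
      simp only [mem_filter, mem_univ, true_and] at this
      exact this
    have hμP : ⇑(muPerm τ hn hjk B) = muB τ hn hjk B :=
      muPerm_apply τ hn hjk B hB1 hB2 hj
    have hπ'app : ∀ y : Fin n, (muPerm τ hn hjk B * f) y = muB τ hn hjk B (f y) := by
      intro y; rw [Equiv.Perm.mul_apply, ← hμP]
    have hfc : ∀ y : Fin n, ¬(((y : ℕ) < k ∨ y ∈ B)) →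
        ¬(((f y : Fin n) : ℕ) < k ∨ f y ∈ B) := by
      intro y hy hc
      have h1 : f (f y) = f y := hfD (f y) hc
      have h2 : f (f y) = y := perm_sq_apply hf1 y
      rw [h2] at h1
      rw [← h1] at hc
      exact hy hc
    have hμD : ∀ y : Fin n, ((y : ℕ) < k ∨ y ∈ B) →
        ((muB τ hn hjk B y : Fin n) : ℕ) < k ∨ muB τ hn hjk B y ∈ B := by
      intro y hy
      rcases hy with h | h
      · rw [muB_lt τ hn hjk B h]
        rcases Finset.mem_union.1 (iotaB_mem τ hn hjk B hB1 hB2 (τ.symm ⟨(y : ℕ), h⟩)) with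
          ht | hb
        · exact Or.inl (Tset_lt τ hn hjk _ ht)
        · exact Or.inr hb
      · obtain ⟨m, hm⟩ := iotaB_surj τ hn hjk B hB1 hB2 (Finset.mem_union_right _ h)
        rw [← hm, muB_iota τ hn hjk B hB1 hB2 hj]
        exact Or.inl (τ m).2
    simp only [Finset.mem_coe, mem_filter, mem_univ, true_and]
    refine ⟨?_, ?_, ?_⟩
    · ext y
      rw [Equiv.Perm.mul_apply, Equiv.Perm.one_apply]
      by_cases hy : ((y : ℕ) < k ∨ y ∈ B)
      · have h1 : (muPerm τ hn hjk B * f) y = muB τ hn hjk B y := by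
          rw [hπ'app, hfD y hy]
        rw [h1]
        have h2 : (muPerm τ hn hjk B * f) (muB τ hn hjk B y)
            = muB τ hn hjk B (muB τ hn hjk B y) := by
          rw [hπ'app, hfD _ (hμD y hy)]
        rw [h2, muB_invol τ hn hjk B hB1 hB2 hj y]
      · have hfcy := hfc y hy
        have h1 : (muPerm τ hn hjk B * f) y = f y := by
          rw [hπ'app]
          rw [not_or, not_lt] at hfcy
          exact muB_high τ hn hjk B hB1 hB2 (not_lt.2 hfcy.1) hfcy.2
        rw [h1, hπ'app, perm_sq_apply hf1]
        rw [not_or, not_lt] at hy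
        rw [muB_high τ hn hjk B hB1 hB2 (not_lt.2 hy.1) hy.2]
    · refine ⟨iotaB τ hn hjk B, iotaB_strictMono τ hn hjk B hB1 hB2, ?_⟩
      intro m
      have hmem := iotaB_mem τ hn hjk B hB1 hB2 m
      have hD : ((iotaB τ hn hjk B m : Fin n) : ℕ) < k ∨ iotaB τ hn hjk B m ∈ B := by
        rcases Finset.mem_union.1 hmem with ht | hb
        · exact Or.inl (Tset_lt τ hn hjk _ ht)
        · exact Or.inr hb
      rw [hπ'app, hfD _ hD, muB_iota τ hn hjk B hB1 hB2 hj]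
      rfl
    · refine Eq.trans ?_ (card_lo (n := k) hjk)
      refine ((Finset.card_bij (fun (m : Fin k)
          (_h : m ∈ Finset.univ.filter fun y : Fin k => (y : ℕ) < j) =>
          Fin.castLE hn (τ m)) ?_ ?_ ?_).symm)
      · intro m hm
        simp only [mem_filter, mem_univ, true_and] at hm ⊢
        have hxk : ((Fin.castLE hn (τ m) : Fin n) : ℕ) < k := (τ m).2
        refine ⟨hxk, ?_⟩
        rw [hπ'app, hfD _ (Or.inl hxk), muB_c, iotaB_lt_iff τ hn hjk B hB1 hB2]
        exact hm
      · intro a _ b _ h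
        exact τ.injective (Fin.castLE_injective hn h)
      · intro x hx
        simp only [mem_filter, mem_univ, true_and] at hx
        obtain ⟨hx1, hx2⟩ := hx
        refine ⟨τ.symm ⟨(x : ℕ), hx1⟩, ?_, ?_⟩
        · simp only [mem_filter, mem_univ, true_and]
          rw [hπ'app, hfD x (Or.inl hx1), muB_lt τ hn hjk B hx1] at hx2
          exact (iotaB_lt_iff τ hn hjk B hB1 hB2 _).1 hx2
        · show Fin.castLE hn (τ (τ.symm ⟨(x : ℕ), hx1⟩)) = x
          rw [Equiv.apply_symm_apply]
          ext; rfl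
  -- left inverse
  · intro π hπ
    simp only [Finset.mem_coe, mem_filter, mem_univ, true_and] at hπ
    obtain ⟨hinv, hcont, hA⟩ := hπ
    have hB1 : ∀ y ∈ (Finset.univ.filter fun y : Fin n =>
        k ≤ (y : ℕ) ∧ ((π y : Fin n) : ℕ) < k), k ≤ (y : ℕ) := by
      intro y hy
      simp only [mem_filter, mem_univ, true_and] at hy; exact hy.1
    have hB2 := Bof_card hn π hinv hA
    dsimp only
    rw [← mul_assoc, muPerm_mul τ hn hjk _ hB1 hB2 hj, one_mul]
  -- right inverse
  · rintro ⟨B, f⟩ hq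
    simp only [Finset.mem_coe, Finset.mem_sigma, mem_filter, mem_univ, true_and] at hq
    obtain ⟨hBmem, hf1, hfD⟩ := hq
    rw [Finset.mem_powersetCard] at hBmem
    obtain ⟨hBsub, hB2⟩ := hBmem
    have hB1 : ∀ y ∈ B, k ≤ (y : ℕ) := by
      intro y hy
      have := hBsub hy
      simp only [mem_filter, mem_univ, true_and] at this
      exact this
    have hμP : ⇑(muPerm τ hn hjk B) = muB τ hn hjk B :=
      muPerm_apply τ hn hjk B hB1 hB2 hj
    have hπ'app : ∀ y : Fin n, ((muPerm τ hn hjk B * f) y : Fin n)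
        = muB τ hn hjk B (f y) := by
      intro y; rw [Equiv.Perm.mul_apply, ← hμP]
    have hfc : ∀ y : Fin n, ¬(((y : ℕ) < k ∨ y ∈ B)) →
        ¬(((f y : Fin n) : ℕ) < k ∨ f y ∈ B) := by
      intro y hy hc
      have h1 : f (f y) = f y := hfD (f y) hc
      have h2 : f (f y) = y := perm_sq_apply hf1 y
      rw [h2] at h1
      rw [← h1] at hc
      exact hy hc
    have hfst : (Finset.univ.filter fun y : Fin n => k ≤ (y : ℕ) ∧
        (((muPerm τ hn hjk B * f) y : Fin n) : ℕ) < k) = B := by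
      ext y
      simp only [mem_filter, mem_univ, true_and]
      constructor
      · rintro ⟨hky, hπy⟩
        by_contra hyB
        have := hfc y (by rw [not_or, not_lt]; exact ⟨hky, hyB⟩)
        rw [not_or, not_lt] at this
        rw [hπ'app] at hπy
        rw [muB_high τ hn hjk B hB1 hB2 (not_lt.2 this.1) this.2] at hπy
        omega
      · intro hyB
        refine ⟨hB1 y hyB, ?_⟩
        rw [hπ'app, hfD y (Or.inr hyB)]
        obtain ⟨m, hm⟩ := iotaB_surj τ hn hjk B hB1 hB2 (Finset.mem_union_right _ hyB)
        rw [← hm, muB_iota τ hn hjk B hB1 hB2 hj]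
        exact (τ m).2
    have hsnd : muPerm τ hn hjk (Finset.univ.filter fun y : Fin n => k ≤ (y : ℕ) ∧
        (((muPerm τ hn hjk B * f) y : Fin n) : ℕ) < k) * (muPerm τ hn hjk B * f) = f := by
      rw [hfst, ← mul_assoc, muPerm_mul τ hn hjk B hB1 hB2 hj, one_mul]
    exact Sigma.ext hfst (heq_of_eq hsnd)
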